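/- For reals 0 < ℙ_l ≤ ℙ_u and P_t ≥ 0, the right-side impermanent loss per unit liquidity satisfies 2(√(P_t) − √(ℙ_l))⁺ − 2(√(P_t) − √(ℙ_u))⁺ − (1/√(ℙ_l))(P_t − ℙ_l)⁺ + (1/√(ℙ_u))(P_t − ℙ_u)⁺ = −(1/2)·∫_{ℙ_l}^{ℙ_u} K^(−3/2)·(P_t − K)⁺ dK. -/

import Mathlib

open MeasureTheory

lemma UILR_hasDeriv_aux (Pt x : ℝ) (hx : 0 < x) :
    HasDerivAt (fun y : ℝ => -2*Pt*y^(-(1:ℝ)/2) - 2*y^((1:ℝ)/2))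
      (x ^ (-(3:ℝ)/2) * (Pt - x)) x := by
  have h1 := (Real.hasDerivAt_rpow_const (x := x) (p := -(1:ℝ)/2) (Or.inl hx.ne'))
  have h2 := (Real.hasDerivAt_rpow_const (x := x) (p := (1:ℝ)/2) (Or.inl hx.ne'))
  have h := (h1.const_mul (-2*Pt)).sub (h2.const_mul 2)
  refine h.congr_deriv ?_
  have hpow : x ^ (-(3:ℝ)/2) * x = x ^ (-(1:ℝ)/2) := by
    have h := (Real.rpow_add hx (-(3:ℝ)/2) 1).symm
    rw [Real.rpow_one] at h
    rw [h]; norm_num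
  have e1 : -(1:ℝ)/2 - 1 = -(3:ℝ)/2 := by norm_num
  have e2 : (1:ℝ)/2 - 1 = -(1:ℝ)/2 := by norm_num
  rw [e1, e2, mul_sub, ← hpow]; ring

lemma UILR_key (Pt a b : ℝ) (ha : 0 < a) (hab : a ≤ b) :
    ∫ K in a..b, K ^ (-(3:ℝ)/2) * (Pt - K)
      = (-2*Pt*b^(-(1:ℝ)/2) - 2*b^((1:ℝ)/2)) - (-2*Pt*a^(-(1:ℝ)/2) - 2*a^((1:ℝ)/2)) := by
  apply intervalIntegral.integral_eq_sub_of_hasDerivAt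
  · intro x hx
    rw [Set.uIcc_of_le hab] at hx
    exact UILR_hasDeriv_aux Pt x (lt_of_lt_of_le ha hx.1)
  · apply ContinuousOn.intervalIntegrable
    apply ContinuousOn.mul
    · apply ContinuousOn.rpow_const continuousOn_id
      intro x hx
      rw [Set.uIcc_of_le hab] at hx
      exact Or.inl (lt_of_lt_of_le ha hx.1).ne'
    · exact (continuous_const.sub continuous_id).continuousOn

lemma UILR_intg (Pt c d : ℝ) (hc : 0 < c) (hcd : c ≤ d) :
    IntervalIntegrable (fun K : ℝ => K ^ (-(3:ℝ)/2) * max (Pt - K) 0) volume c d := by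
  apply ContinuousOn.intervalIntegrable
  apply ContinuousOn.mul
  · apply ContinuousOn.rpow_const continuousOn_id
    intro x hx
    rw [Set.uIcc_of_le hcd] at hx
    exact Or.inl (lt_of_lt_of_le hc hx.1).ne'
  · exact ((continuous_const.sub continuous_id).max continuous_const).continuousOn

lemma UILR_rp (x : ℝ) : x ^ ((1:ℝ)/2) = Real.sqrt x := (Real.sqrt_eq_rpow x).symm

lemma UILR_rn (x : ℝ) (hx : 0 ≤ x) : x ^ (-(1:ℝ)/2) = 1 / Real.sqrt x := by
  rw [show -(1:ℝ)/2 = -((1:ℝ)/2) by norm_num, Real.rpow_neg hx, UILR_rp, one_div]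

theorem UILR_integral_representation
    (Pl Pu Pt : ℝ) (hPl : 0 < Pl) (hlu : Pl ≤ Pu) (hPt : 0 ≤ Pt) :
    2 * max (Real.sqrt Pt - Real.sqrt Pl) 0
      - 2 * max (Real.sqrt Pt - Real.sqrt Pu) 0
      - (1 / Real.sqrt Pl) * max (Pt - Pl) 0
      + (1 / Real.sqrt Pu) * max (Pt - Pu) 0
    = -(1 / 2) * ∫ K in Pl..Pu, K ^ (-(3 : ℝ) / 2) * max (Pt - K) 0 := by
  have hPu : 0 < Pu := lt_of_lt_of_le hPl hlu
  obtain ⟨l, hl0, rfl⟩ : ∃ l, 0 < l ∧ Pl = l * l :=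
    ⟨_, Real.sqrt_pos.mpr hPl, (Real.mul_self_sqrt hPl.le).symm⟩
  obtain ⟨u, hu0, rfl⟩ : ∃ u, 0 < u ∧ Pu = u * u :=
    ⟨_, Real.sqrt_pos.mpr hPu, (Real.mul_self_sqrt hPu.le).symm⟩
  obtain ⟨t, ht0, rfl⟩ : ∃ t, 0 ≤ t ∧ Pt = t * t :=
    ⟨_, Real.sqrt_nonneg Pt, (Real.mul_self_sqrt hPt).symm⟩
  simp only [Real.sqrt_mul_self hl0.le, Real.sqrt_mul_self hu0.le, Real.sqrt_mul_self ht0]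
  have hlu' : l ≤ u := by nlinarith
  rcases le_or_gt t l with h1 | h1
  · -- t ≤ l : everything vanishes
    have m1 : max (t - l) 0 = 0 := max_eq_right (by linarith)
    have m2 : max (t - u) 0 = 0 := max_eq_right (by linarith)
    have m3 : max (t*t - l*l) 0 = 0 := max_eq_right (by nlinarith)
    have m4 : max (t*t - u*u) 0 = 0 := max_eq_right (by nlinarith)
    have hint : (∫ K in l*l..u*u, K ^ (-(3 : ℝ)/2) * max (t*t - K) 0) = 0 := by
      rw [intervalIntegral.integral_congr (g := fun _ => (0:ℝ))]
      · simp
      · intro K hK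
        rw [Set.uIcc_of_le hlu] at hK
        have : t*t - K ≤ 0 := by nlinarith [hK.1]
        simp [max_eq_right this]
    rw [m1, m2, m3, m4, hint]; ring
  · have ht0' : 0 < t := hl0.trans h1
    rcases le_or_gt t u with h2 | h2
    · -- l < t ≤ u
      have hll : l*l < t*t := by nlinarith
      have htu : t*t ≤ u*u := by nlinarith
      have hsplit := (intervalIntegral.integral_add_adjacent_intervals
        (UILR_intg (t*t) (l*l) (t*t) hPl hll.le) (UILR_intg (t*t) (t*t) (u*u) (by positivity) htu))
      have i1 : (∫ K in l*l..t*t, K ^ (-(3 : ℝ)/2) * max (t*t - K) 0)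
          = ∫ K in l*l..t*t, K ^ (-(3 : ℝ)/2) * (t*t - K) := by
        apply intervalIntegral.integral_congr
        intro K hK
        rw [Set.uIcc_of_le hll.le] at hK
        simp only [max_eq_left (sub_nonneg.mpr hK.2)]
      have i2 : (∫ K in t*t..u*u, K ^ (-(3 : ℝ)/2) * max (t*t - K) 0) = 0 := by
        rw [intervalIntegral.integral_congr (g := fun _ => (0:ℝ))]
        · simp
        · intro K hK
          rw [Set.uIcc_of_le htu] at hK
          have : t*t - K ≤ 0 := by linarith [hK.1]
          simp [max_eq_right this]
      have hint : (∫ K in l*l..u*u, K ^ (-(3 : ℝ)/2) * max (t*t - K) 0)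
          = ∫ K in l*l..t*t, K ^ (-(3 : ℝ)/2) * (t*t - K) := by
        rw [← hsplit, i1, i2, add_zero]
      rw [hint, UILR_key (t*t) (l*l) (t*t) hPl hll.le,
        UILR_rp (t*t), UILR_rp (l*l), UILR_rn (t*t) (by positivity), UILR_rn (l*l) hPl.le,
        Real.sqrt_mul_self hl0.le, Real.sqrt_mul_self ht0]
      have m1 : max (t - l) 0 = t - l := max_eq_left (by linarith)
      have m2 : max (t - u) 0 = 0 := max_eq_right (by linarith)
      have m3 : max (t*t - l*l) 0 = t*t - l*l := max_eq_left (by nlinarith)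
      have m4 : max (t*t - u*u) 0 = 0 := max_eq_right (by nlinarith)
      rw [m1, m2, m3, m4]
      field_simp
      ring
    · -- u < t
      have hint : (∫ K in l*l..u*u, K ^ (-(3 : ℝ)/2) * max (t*t - K) 0)
          = ∫ K in l*l..u*u, K ^ (-(3 : ℝ)/2) * (t*t - K) := by
        apply intervalIntegral.integral_congr
        intro K hK
        rw [Set.uIcc_of_le hlu] at hK
        have : K ≤ t*t := by nlinarith [hK.2]
        simp only [max_eq_left (sub_nonneg.mpr this)]
      rw [hint, UILR_key (t*t) (l*l) (u*u) hPl hlu,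
        UILR_rp (u*u), UILR_rp (l*l), UILR_rn (u*u) hPu.le, UILR_rn (l*l) hPl.le,
        Real.sqrt_mul_self hl0.le, Real.sqrt_mul_self hu0.le]
      have m1 : max (t - l) 0 = t - l := max_eq_left (by linarith)
      have m2 : max (t - u) 0 = t - u := max_eq_left (by linarith)
      have m3 : max (t*t - l*l) 0 = t*t - l*l := max_eq_left (by nlinarith)
      have m4 : max (t*t - u*u) 0 = t*t - u*u := max_eq_left (by nlinarith)
      rw [m1, m2, m3, m4]
      field_simp
      ring
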